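/- Let p, q be positive integers with q < p, r = p/q, and 0 < c < 1 real. Then the polynomial W(z) = c·z^p − r·z^q + (r−1) has exactly two real positive roots z₀ and z₁ satisfying 0 < z₀ < 1 < z₁, and moreover z₀·z₁ > 1. -/
import Mathlib

open Finset

private lemma phi_le {z : ℝ} (h0 : 0 < z) (h1 : z < 1) {p i j : ℕ}
    (hij : i ≤ j) (hj : j + 1 ≤ p) :
    z ^ j + z ^ (2*p - 1 - j) ≤ z ^ i + z ^ (2*p - 1 - i) := by
  have e1 : z ^ j = z ^ i * z ^ (j - i) := by rw [← pow_add]; congr 1; omega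
  have e2 : z ^ (2*p - 1 - i) = z ^ (2*p - 1 - j) * z ^ (j - i) := by
    rw [← pow_add]; congr 1; omega
  have hz : z ^ (2*p - 1 - j) ≤ z ^ i :=
    (pow_right_strictAnti₀ h0 h1).antitone (by omega)
  have hd : z ^ (j - i) ≤ 1 := pow_le_one₀ h0.le h1.le
  nlinarith [mul_nonneg (sub_nonneg.2 hz) (sub_nonneg.2 hd)]

private lemma phi_lt {z : ℝ} (h0 : 0 < z) (h1 : z < 1) {p i j : ℕ}
    (hij : i < j) (hj : j + 1 ≤ p) :
    z ^ j + z ^ (2*p - 1 - j) < z ^ i + z ^ (2*p - 1 - i) := by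
  have e1 : z ^ j = z ^ i * z ^ (j - i) := by rw [← pow_add]; congr 1; omega
  have e2 : z ^ (2*p - 1 - i) = z ^ (2*p - 1 - j) * z ^ (j - i) := by
    rw [← pow_add]; congr 1; omega
  have hz : z ^ (2*p - 1 - j) < z ^ i :=
    pow_right_strictAnti₀ h0 h1 (by omega)
  have hd : z ^ (j - i) < 1 := pow_lt_one₀ h0.le h1 (by omega)
  nlinarith [mul_pos (sub_pos.2 hz) (sub_pos.2 hd)]

private lemma key_sum {p q : ℕ} (hq : 0 < q) (hpq : q < p) {z : ℝ} (h0 : 0 < z) (h1 : z < 1) :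
    (p:ℝ) * (z^q * ∑ i ∈ range (2*(p-q)), z^i) < ((p:ℝ) - q) * ∑ i ∈ range (2*p), z^i := by
  set a : ℕ := p - q with ha
  have hpa : p = q + a := by omega
  have ha0 : 0 < a := by omega
  set φ : ℕ → ℝ := fun i => z^i + z^(2*p - 1 - i) with hφ
  have A : ∑ i ∈ range (2*p), z^i = ∑ i ∈ range p, φ i := by
    rw [show 2*p = p + p by ring, Finset.sum_range_add]
    have h2 : ∑ i ∈ range p, z^(p+i) = ∑ i ∈ range p, z^(2*p-1-i) := by
      rw [← Finset.sum_range_reflect (fun i => z^(p+i)) p]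
      refine Finset.sum_congr rfl fun i hi => ?_
      simp only [Finset.mem_range] at hi
      congr 1; omega
    rw [h2, ← Finset.sum_add_distrib]
  have B : z^q * ∑ i ∈ range (2*a), z^i = ∑ i ∈ range a, φ (q+i) := by
    have e : z^q * ∑ i ∈ range (2*a), z^i = ∑ i ∈ range (2*a), z^(q+i) := by
      rw [Finset.mul_sum]; exact Finset.sum_congr rfl fun i _ => (pow_add z q i).symm
    rw [e, show 2*a = a + a by ring, Finset.sum_range_add]
    have h2 : ∑ i ∈ range a, z^(q+(a+i)) = ∑ i ∈ range a, z^(2*p-1-(q+i)) := by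
      rw [← Finset.sum_range_reflect (fun i => z^(q+(a+i))) a]
      refine Finset.sum_congr rfl fun i hi => ?_
      simp only [Finset.mem_range] at hi
      congr 1; omega
    rw [h2, ← Finset.sum_add_distrib]
  have C : ∑ i ∈ range p, φ i = ∑ i ∈ range q, φ i + ∑ i ∈ range a, φ (q+i) := by
    rw [hpa, Finset.sum_range_add]
  have hb1 : ∑ i ∈ range a, φ (q+i) ≤ (a:ℝ) * φ q := by
    calc ∑ i ∈ range a, φ (q+i) ≤ ∑ _i ∈ range a, φ q :=
          Finset.sum_le_sum fun i hi => by
            have hi' : i < a := Finset.mem_range.1 hi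
            exact phi_le h0 h1 (Nat.le_add_right q i) (by omega)
      _ = (a:ℝ) * φ q := by rw [Finset.sum_const, Finset.card_range, nsmul_eq_mul]
  have hb2 : (q:ℝ) * φ (q-1) ≤ ∑ i ∈ range q, φ i := by
    calc (q:ℝ) * φ (q-1) = ∑ _i ∈ range q, φ (q-1) := by
          rw [Finset.sum_const, Finset.card_range, nsmul_eq_mul]
      _ ≤ ∑ i ∈ range q, φ i :=
          Finset.sum_le_sum fun i hi => by
            have hi' : i < q := Finset.mem_range.1 hi
            exact phi_le h0 h1 (by omega) (by omega)
  have hb3 : φ q < φ (q-1) := phi_lt h0 h1 (by omega) (by omega)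
  have hacast : (a:ℝ) = (p:ℝ) - q := by rw [ha, Nat.cast_sub hpq.le]
  have hq0 : (0:ℝ) < q := by exact_mod_cast hq
  have ha0' : (0:ℝ) < a := by exact_mod_cast ha0
  have step : (q:ℝ) * (∑ i ∈ range a, φ (q+i)) < (a:ℝ) * ∑ i ∈ range q, φ i := by
    calc (q:ℝ) * (∑ i ∈ range a, φ (q+i)) ≤ (q:ℝ) * ((a:ℝ) * φ q) :=
          mul_le_mul_of_nonneg_left hb1 hq0.le
      _ < (q:ℝ) * ((a:ℝ) * φ (q-1)) :=
          mul_lt_mul_of_pos_left (mul_lt_mul_of_pos_left hb3 ha0') hq0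
      _ = (a:ℝ) * ((q:ℝ) * φ (q-1)) := by ring
      _ ≤ (a:ℝ) * ∑ i ∈ range q, φ i := mul_le_mul_of_nonneg_left hb2 ha0'.le
  have hpcast : (p:ℝ) = (q:ℝ) + (a:ℝ) := by rw [hpa]; push_cast; ring
  rw [A, B, C, ← hacast, hpcast]
  linarith [step]

private lemma H_pos {p q : ℕ} (hq : 0 < q) (hpq : q < p) {z : ℝ} (h0 : 0 < z) (h1 : z < 1) :
    (p:ℝ) * (z^q * (1 - z^(2*(p-q)))) < ((p:ℝ) - q) * (1 - z^(2*p)) := by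
  have hk := key_sum hq hpq h0 h1
  have g1 := geom_sum_mul z (2*p)
  have g2 := geom_sum_mul z (2*(p-q))
  have h1z : (0:ℝ) < 1 - z := by linarith
  have e1 : (1 - z) * (((p:ℝ) - q) * ∑ i ∈ range (2*p), z^i)
      = ((p:ℝ)-q) * (1 - z^(2*p)) := by linear_combination ((q:ℝ)-p) * g1
  have e2 : (1 - z) * ((p:ℝ) * (z^q * ∑ i ∈ range (2*(p-q)), z^i))
      = (p:ℝ) * (z^q * (1 - z^(2*(p-q)))) := by linear_combination (-(p:ℝ)*z^q) * g2
  rw [← e1, ← e2]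
  exact mul_lt_mul_of_pos_left hk h1z
set_option maxHeartbeats 800000 in
/-- For `0 < c < 1` real, `W(z) = c·z^p − r·z^q + (r−1)` (with `r = p/q > 1`)
has exactly two positive real roots `z₀, z₁` with `0 < z₀ < 1 < z₁` and `z₀·z₁ > 1`. -/
theorem two_positive_roots (p q : ℕ) (hq : 0 < q) (hpq : q < p) (c : ℝ)
    (hc0 : 0 < c) (hc1 : c < 1) :
    ∃ z₀ z₁ : ℝ, 0 < z₀ ∧ z₀ < 1 ∧ 1 < z₁ ∧
      c * z₀ ^ p - ((p : ℝ) / q) * z₀ ^ q + ((p : ℝ) / q - 1) = 0 ∧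
      c * z₁ ^ p - ((p : ℝ) / q) * z₁ ^ q + ((p : ℝ) / q - 1) = 0 ∧
      1 < z₀ * z₁ ∧
      ∀ z : ℝ, 0 < z →
        c * z ^ p - ((p : ℝ) / q) * z ^ q + ((p : ℝ) / q - 1) = 0 → z = z₀ ∨ z = z₁ := by
  have hq0 : (0:ℝ) < q := by exact_mod_cast hq
  have hp0 : (0:ℝ) < p := by exact_mod_cast (by omega : 0 < p)
  set r : ℝ := (p:ℝ)/(q:ℝ) with hrdef
  have hrq : r * q = p := div_mul_cancel₀ _ hq0.ne'
  have hr1 : 1 < r := (one_lt_div hq0).2 (by exact_mod_cast hpq)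
  set f : ℝ → ℝ := fun z => c*z^p - r*z^q + (r-1) with hf
  have hcont : Continuous f := by fun_prop
  set a : ℕ := p - q with ha
  have ha0 : 0 < a := by omega
  have hpa : p = q + a := by omega
  set m : ℝ := (1/c) ^ ((a:ℝ)⁻¹) with hm
  have hminv : 1 < (1:ℝ)/c := by rw [lt_div_iff₀ hc0]; linarith
  have hm1 : 1 < m := by
    rw [hm, Real.one_lt_rpow_iff_of_pos (by positivity)]
    left
    exact ⟨hminv, by positivity⟩
  have hm0 : 0 < m := lt_trans one_pos hm1
  have hma : m ^ a = 1/c := by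
    rw [hm, ← Real.rpow_natCast ((1/c) ^ ((a:ℝ)⁻¹)) a, ← Real.rpow_mul (by positivity),
      inv_mul_cancel₀ (by exact_mod_cast ha0.ne'), Real.rpow_one]
  have hderiv : ∀ x : ℝ, HasDerivAt f (c*((p:ℝ)*x^(p-1)) - r*((q:ℝ)*x^(q-1))) x := fun x =>
    (((hasDerivAt_pow p x).const_mul c).sub ((hasDerivAt_pow q x).const_mul r)).add_const (r-1)
  have hepq : ∀ x:ℝ, x^(p-1) = x^(q-1) * x^a := fun x => by rw [← pow_add]; congr 1; omega
  have hdec : ∀ x:ℝ, c*((p:ℝ)*x^(p-1)) - r*((q:ℝ)*x^(q-1))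
      = ((p:ℝ)*x^(q-1)) * (c*x^a - 1) := by
    intro x
    rw [hepq x]
    linear_combination (-(x^(q-1))) * hrq
  have hderiv_neg : ∀ x ∈ Set.Ioo (0:ℝ) m, deriv f x < 0 := by
    intro x hx
    rw [(hderiv x).deriv, hdec x]
    have hxa : c * x^a < 1 := by
      have h1 : x^a < m^a := pow_lt_pow_left₀ hx.2 hx.1.le ha0.ne'
      have h2 : c * m^a = 1 := by rw [hma]; field_simp
      linarith [mul_lt_mul_of_pos_left h1 hc0]
    exact mul_neg_of_pos_of_neg (mul_pos hp0 (pow_pos hx.1 _)) (by linarith)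
  have hderiv_pos : ∀ x ∈ Set.Ioi m, 0 < deriv f x := by
    intro x hx
    simp only [Set.mem_Ioi] at hx
    have hx0 : 0 < x := lt_trans hm0 hx
    rw [(hderiv x).deriv, hdec x]
    have hxa : 1 < c * x^a := by
      have h1 : m^a < x^a := pow_lt_pow_left₀ hx hm0.le ha0.ne'
      have h2 : c * m^a = 1 := by rw [hma]; field_simp
      linarith [mul_lt_mul_of_pos_left h1 hc0]
    exact mul_pos (mul_pos hp0 (pow_pos hx0 _)) (by linarith)
  have hanti : StrictAntiOn f (Set.Icc 0 m) :=
    strictAntiOn_of_deriv_neg (convex_Icc 0 m) hcont.continuousOn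
      (by rw [interior_Icc]; exact hderiv_neg)
  have hmono : StrictMonoOn f (Set.Ici m) :=
    strictMonoOn_of_deriv_pos (convex_Ici m) hcont.continuousOn
      (by rw [interior_Ici]; exact hderiv_pos)
  have hf0 : f 0 = r - 1 := by
    simp [hf, zero_pow (by omega : p ≠ 0), zero_pow hq.ne']
  have hf1 : f 1 = c - 1 := by simp [hf]
  have hivt0 : Set.Ioo (f 1) (f 0) ⊆ f '' Set.Ioo 0 1 :=
    intermediate_value_Ioo' zero_le_one hcont.continuousOn
  obtain ⟨z₀, hz₀mem, hz₀⟩ := hivt0 (show (0:ℝ) ∈ Set.Ioo (f 1) (f 0) by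
    rw [hf0, hf1]; exact ⟨by linarith, by linarith⟩)
  have hz₀0 : 0 < z₀ := hz₀mem.1
  have hz₀1 : z₀ < 1 := hz₀mem.2
  have hfm : f m < 0 := by
    have h := hanti ⟨zero_le_one, hm1.le⟩ ⟨hm0.le, le_refl m⟩ hm1
    rw [hf1] at h; linarith
  set M : ℝ := max (m+1) (r/c + 1) with hM
  have hMm : m < M := lt_of_lt_of_le (by linarith) (le_max_left _ _)
  have hM1 : 1 < M := lt_trans hm1 hMm
  have hfM : 0 < f M := by
    have hM0 : 0 < M := by linarith
    have e : M^p = M^q * M^a := by rw [← pow_add, ← hpa]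
    have hMa : M ≤ M^a := le_self_pow₀ hM1.le ha0.ne'
    have hMq : 0 < M^q := pow_pos hM0 q
    have hcM : r < c*M := by
      have h1 : r/c + 1 ≤ M := le_max_right _ _
      have h2 : c*(r/c+1) = r + c := by field_simp
      have h4 := mul_le_mul_of_nonneg_left h1 hc0.le
      linarith
    have h3 : r*M^q < c*M^p := by
      rw [e]
      calc r*M^q < (c*M)*M^q := mul_lt_mul_of_pos_right hcM hMq
        _ ≤ (c*M^a)*M^q :=
            mul_le_mul_of_nonneg_right (mul_le_mul_of_nonneg_left hMa hc0.le) hMq.le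
        _ = c*(M^q*M^a) := by ring
    show 0 < c*M^p - r*M^q + (r-1)
    linarith
  have hivt1 : Set.Ioo (f m) (f M) ⊆ f '' Set.Ioo m M :=
    intermediate_value_Ioo hMm.le hcont.continuousOn
  obtain ⟨z₁, hz₁mem, hz₁⟩ := hivt1 ⟨hfm, hfM⟩
  have hz₁m : m < z₁ := hz₁mem.1
  have hz₁1 : 1 < z₁ := lt_trans hm1 hz₁m
  have huniq : ∀ z : ℝ, 0 < z → f z = 0 → z = z₀ ∨ z = z₁ := by
    intro z hz hfz
    rcases le_or_gt z m with h | h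
    · left
      exact hanti.injOn ⟨hz.le, h⟩ ⟨hz₀0.le, le_trans hz₀1.le hm1.le⟩ (by rw [hfz, hz₀])
    · right
      exact hmono.injOn (Set.mem_Ici.2 h.le) (Set.mem_Ici.2 hz₁m.le) (by rw [hfz, hz₁])
  -- the analytic inequality: f (1/z₀) < 0
  have hroot : c*z₀^p - r*z₀^q + (r-1) = 0 := hz₀
  have ht0 : 0 < z₀^q := pow_pos hz₀0 q
  have hT0 : 0 < z₀^p := pow_pos hz₀0 p
  have hza0 : 0 < z₀^a := pow_pos hz₀0 a
  set t : ℝ := z₀^q with htdef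
  set T : ℝ := z₀^p with hTdef
  set za : ℝ := z₀^a with hzadef
  have ht1 : t < 1 := pow_lt_one₀ hz₀0.le hz₀1 hq.ne'
  have hTt : T = t * za := by rw [hTdef, htdef, hzadef, ← pow_add, ← hpa]
  have e2p : z₀^(2*p) = T^2 := by rw [hTdef, ← pow_mul]; congr 1; omega
  have e2a : z₀^(2*a) = za^2 := by rw [hzadef, ← pow_mul]; congr 1; omega
  have hH : 0 < ((p:ℝ)-q)*(1 - T^2) - (p:ℝ)*(t*(1 - za^2)) := by
    have h := H_pos hq hpq hz₀0 hz₀1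
    rw [← ha] at h
    rw [e2p, e2a, ← htdef] at h
    linarith
  have hGeq : t * (((p:ℝ)-q)*(1 - T^2) - (p:ℝ)*(t*(1 - za^2)))
      = (p:ℝ)*T^2 - (p:ℝ)*t^2 + ((p:ℝ)-q)*t - ((p:ℝ)-q)*(T^2*t) := by
    linear_combination (-(p:ℝ)*(T + t*za)) * hTt
  have hG : 0 < (p:ℝ)*T^2 - (p:ℝ)*t^2 + ((p:ℝ)-q)*t - ((p:ℝ)-q)*(T^2*t) := by
    rw [← hGeq]; exact mul_pos ht0 hH
  have hroot' : c*T - r*t + (r-1) = 0 := hroot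
  have hE' : (q:ℝ)*(c*T) - (p:ℝ)*t + ((p:ℝ) - q) = 0 := by
    linear_combination (q:ℝ)*hroot' + (t-1)*hrq
  have hkey2 : ((p:ℝ)*t - p + q)*t - (p:ℝ)*T^2 + ((p:ℝ)-q)*(T^2*t) < 0 := by linarith [hG]
  have hPq : ((q:ℝ)*c - (p:ℝ)*za + ((p:ℝ)-q)*T) * (T*t) < 0 := by
    have expand : ((q:ℝ)*c - (p:ℝ)*za + ((p:ℝ)-q)*T) * (T*t)
        = ((p:ℝ)*t - p + q)*t - (p:ℝ)*T^2 + ((p:ℝ)-q)*(T^2*t) := by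
      linear_combination t*hE' + (p:ℝ)*T*hTt
    rw [expand]; exact hkey2
  have hP : (q:ℝ)*c - (p:ℝ)*za + ((p:ℝ)-q)*T < 0 := by
    by_contra hcon
    push_neg at hcon
    have h5 : (0:ℝ) ≤ ((q:ℝ)*c - (p:ℝ)*za + ((p:ℝ)-q)*T) * (T*t) :=
      mul_nonneg hcon (mul_pos hT0 ht0).le
    linarith [hPq]
  have hfinv : f (1/z₀) < 0 := by
    have eval : f (1/z₀) = c*(1/T) - r*(1/t) + (r-1) := by
      show c*(1/z₀)^p - r*(1/z₀)^q + (r-1) = _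
      rw [div_pow, div_pow, one_pow, one_pow, ← hTdef, ← htdef]
    have h1 : T*(1/T) = 1 := by field_simp
    have h2 : t*(1/t) = 1 := by field_simp
    have emul : ((q:ℝ)*T*t) * f (1/z₀) = (q:ℝ)*c*t - (p:ℝ)*T + ((p:ℝ)-q)*(T*t) := by
      rw [eval]
      linear_combination (q:ℝ)*c*t*h1 - (q:ℝ)*r*T*h2 + (T*t - T)*hrq
    have hRHSeq : t*((q:ℝ)*c - (p:ℝ)*za + ((p:ℝ)-q)*T)
        = (q:ℝ)*c*t - (p:ℝ)*T + ((p:ℝ)-q)*(T*t) := by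
      linear_combination (p:ℝ)*hTt
    have hRHS : (q:ℝ)*c*t - (p:ℝ)*T + ((p:ℝ)-q)*(T*t) < 0 := by
      rw [← hRHSeq]; exact mul_neg_of_pos_of_neg ht0 hP
    rw [← emul] at hRHS
    by_contra hcon
    push_neg at hcon
    have h5 : (0:ℝ) ≤ ((q:ℝ)*T*t) * f (1/z₀) :=
      mul_nonneg (mul_pos (mul_pos hq0 hT0) ht0).le hcon
    linarith [hRHS]
  have hprod : 1 < z₀ * z₁ := by
    by_contra hcon
    push_neg at hcon
    have hle : z₁ ≤ 1/z₀ := by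
      rw [le_div_iff₀ hz₀0, mul_comm]
      exact hcon
    rcases eq_or_lt_of_le hle with h | h
    · rw [← h] at hfinv
      rw [hz₁] at hfinv
      exact lt_irrefl 0 hfinv
    · have h2 := hmono (Set.mem_Ici.2 hz₁m.le) (Set.mem_Ici.2 (le_trans hz₁m.le hle)) h
      rw [hz₁] at h2
      linarith
  exact ⟨z₀, z₁, hz₀0, hz₀1, hz₁1, hz₀, hz₁, hprod, huniq⟩
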